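/- Let R be a unital ring. Then R has a Sylvester matrix rank function if and only if for every n ∈ ℕ, the identity matrix I_{n+1} is not Malcolmson subequivalent to I_n. -/

import Mathlib

open Matrix in
/-- The type of all rectangular matrices over `R`. -/
abbrev MatSig (R : Type) [Ring R] := Σ (n m : ℕ), Matrix (Fin n) (Fin m) R

open Matrix in
/-- The block diagonal-with-corner matrix `[[C, E], [0, D]]`, as an element of `MatSig R`. -/
def blockSig {R : Type} [Ring R] {p q r s : ℕ} (C : Matrix (Fin p) (Fin r) R)
    (E : Matrix (Fin p) (Fin s) R) (D : Matrix (Fin q) (Fin s) R) : MatSig R :=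
  ⟨p + q, r + s, Matrix.reindex finSumFinEquiv finSumFinEquiv (Matrix.fromBlocks C E 0 D)⟩

/-- One step of the Malcolmson relation: `A ≲ B` iff `A = C * B * D` for some `C, D`, or
`B = [[C, E], [0, D]]` and `A = [[C, 0], [0, D]]` for some `C, D, E`. -/
def MStep {R : Type} [Ring R] (A B : MatSig R) : Prop :=
  (∃ (C : Matrix (Fin A.1) (Fin B.1) R) (D : Matrix (Fin B.2.1) (Fin A.2.1) R),
      A.2.2 = C * B.2.2 * D) ∨
  (∃ (p q r s : ℕ) (C : Matrix (Fin p) (Fin r) R) (E : Matrix (Fin p) (Fin s) R)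
      (D : Matrix (Fin q) (Fin s) R), A = blockSig C 0 D ∧ B = blockSig C E D)

/-- Malcolmson subequivalence `A ≼_M B`: a finite chain of `MStep`s from `A` to `B`. -/
def Msub {R : Type} [Ring R] (A B : MatSig R) : Prop :=
  Relation.ReflTransGen (MStep (R := R)) A B

/-- A Sylvester matrix rank function for a unital ring `R`. -/
structure SylvesterRank (R : Type) [Ring R] where
  rk : MatSig R → ℝ
  rk_nonneg : ∀ A, 0 ≤ rk A
  rk_zero : rk ⟨1, 1, 0⟩ = 0
  rk_one : rk ⟨1, 1, 1⟩ = 1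
  rk_mul_le_left : ∀ {n m k : ℕ} (A : Matrix (Fin n) (Fin m) R) (B : Matrix (Fin m) (Fin k) R),
      rk ⟨n, k, A * B⟩ ≤ rk ⟨n, m, A⟩
  rk_mul_le_right : ∀ {n m k : ℕ} (A : Matrix (Fin n) (Fin m) R) (B : Matrix (Fin m) (Fin k) R),
      rk ⟨n, k, A * B⟩ ≤ rk ⟨m, k, B⟩
  rk_diag : ∀ {p q r s : ℕ} (A : Matrix (Fin p) (Fin r) R) (B : Matrix (Fin q) (Fin s) R),
      rk (blockSig A 0 B) = rk ⟨p, r, A⟩ + rk ⟨q, s, B⟩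
  rk_block_ge : ∀ {p q r s : ℕ} (A : Matrix (Fin p) (Fin r) R) (E : Matrix (Fin p) (Fin s) R)
      (B : Matrix (Fin q) (Fin s) R), rk ⟨p, r, A⟩ + rk ⟨q, s, B⟩ ≤ rk (blockSig A E B)

/-- The rank of a ring element, viewed as a `1 × 1` matrix. -/
noncomputable def SylvesterRank.rk1 {R : Type} [Ring R] (f : SylvesterRank R) (a : R) : ℝ :=
  f.rk ⟨1, 1, Matrix.of fun _ _ => a⟩

namespace Stmt3
open Matrix

lemma finSumFinEquiv_symm_eq {m n : ℕ} (i : Fin (m + n)) :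
    finSumFinEquiv.symm i = if h : (i : ℕ) < m then Sum.inl ⟨i, h⟩
      else Sum.inr ⟨(i : ℕ) - m, by omega⟩ := by
  induction i using Fin.addCases with
  | left i => rw [finSumFinEquiv_symm_apply_castAdd]; simp [Fin.ext_iff]
  | right i =>
      rw [finSumFinEquiv_symm_apply_natAdd]
      have : ¬ ((Fin.natAdd m i : ℕ) < m) := by simp
      simp [this, Fin.ext_iff]

variable {R : Type} [Ring R]

lemma blockSig_apply {p q r s : ℕ} (C : Matrix (Fin p) (Fin r) R)
    (E : Matrix (Fin p) (Fin s) R) (D : Matrix (Fin q) (Fin s) R)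
    (i : Fin (p + q)) (j : Fin (r + s)) :
    (blockSig C E D).2.2 i j =
      if hi : (i : ℕ) < p then
        (if hj : (j : ℕ) < r then C ⟨i, hi⟩ ⟨j, hj⟩ else E ⟨i, hi⟩ ⟨(j : ℕ) - r, by omega⟩)
      else
        (if hj : (j : ℕ) < r then 0 else D ⟨(i : ℕ) - p, by omega⟩ ⟨(j : ℕ) - r, by omega⟩) := by
  show (Matrix.reindex finSumFinEquiv finSumFinEquiv (Matrix.fromBlocks C E 0 D)) i j = _
  rw [Matrix.reindex_apply, Matrix.submatrix_apply, finSumFinEquiv_symm_eq, finSumFinEquiv_symm_eq]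
  split_ifs <;> simp

lemma blockSig_apply' {p q r s : ℕ} (C : Matrix (Fin p) (Fin r) R)
    (E : Matrix (Fin p) (Fin s) R) (D : Matrix (Fin q) (Fin s) R)
    (i : Fin (blockSig C E D).1) (j : Fin (blockSig C E D).2.1) :
    (blockSig C E D).2.2 i j =
      if hi : (i : ℕ) < p then
        (if hj : (j : ℕ) < r then C ⟨i, hi⟩ ⟨j, hj⟩ else E ⟨i, hi⟩ ⟨(j : ℕ) - r,
          by have := j.2; change (j : ℕ) < r + s at this; omega⟩)
      else
        (if hj : (j : ℕ) < r then 0 else D ⟨(i : ℕ) - p,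
          by have := i.2; change (i : ℕ) < p + q at this; omega⟩ ⟨(j : ℕ) - r,
          by have := j.2; change (j : ℕ) < r + s at this; omega⟩) :=
  blockSig_apply C E D i j

lemma one_sub_mul {a n m : ℕ} (f : Fin a → Fin n) (M : Matrix (Fin n) (Fin m) R) :
    (1 : Matrix (Fin n) (Fin n) R).submatrix f id * M = M.submatrix f id := by
  ext i j
  simp [Matrix.mul_apply, Matrix.one_apply]

lemma mul_one_sub {n m b : ℕ} (M : Matrix (Fin n) (Fin m) R) (g : Fin b → Fin m) :
    M * (1 : Matrix (Fin m) (Fin m) R).submatrix id g = M.submatrix id g := by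
  ext i j
  simp [Matrix.mul_apply, Matrix.one_apply]

lemma mstep_submatrix (A : MatSig R) {a b : ℕ} (f : Fin a → Fin A.1) (g : Fin b → Fin A.2.1) :
    MStep (⟨a, b, A.2.2.submatrix f g⟩ : MatSig R) A := by
  refine Or.inl ⟨(1 : Matrix (Fin A.1) (Fin A.1) R).submatrix f id,
    (1 : Matrix (Fin A.2.1) (Fin A.2.1) R).submatrix id g, ?_⟩
  show A.2.2.submatrix f g = _
  rw [one_sub_mul, mul_one_sub, Matrix.submatrix_submatrix]
  rfl

lemma sigma_eta (A : MatSig R) : A = ⟨A.1, A.2.1, A.2.2⟩ := rfl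

/-- mutual subequivalence -/
def MEq (A B : MatSig R) : Prop := Msub A B ∧ Msub B A

lemma MEq.refl (A : MatSig R) : MEq A A := ⟨.refl, .refl⟩
lemma MEq.symm {A B : MatSig R} (h : MEq A B) : MEq B A := ⟨h.2, h.1⟩
lemma MEq.trans {A B C : MatSig R} (h : MEq A B) (h' : MEq B C) : MEq A C :=
  ⟨h.1.trans h'.1, h'.2.trans h.2⟩

lemma meq_of_equiv (A : MatSig R) {a b : ℕ} (σ : Fin a ≃ Fin A.1) (τ : Fin b ≃ Fin A.2.1) :
    MEq (⟨a, b, A.2.2.submatrix σ τ⟩ : MatSig R) A := by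
  constructor
  · exact Relation.ReflTransGen.single (mstep_submatrix A σ τ)
  · have h : A = ⟨A.1, A.2.1, (A.2.2.submatrix σ τ).submatrix σ.symm τ.symm⟩ := by
      rw [Matrix.submatrix_submatrix, Equiv.self_comp_symm, Equiv.self_comp_symm,
        Matrix.submatrix_id_id]
    nth_rewrite 1 [h]
    exact Relation.ReflTransGen.single
      (mstep_submatrix (⟨a, b, A.2.2.submatrix σ τ⟩ : MatSig R) σ.symm τ.symm)

abbrev idsig (R : Type) [Ring R] (n : ℕ) : MatSig R := ⟨n, n, 1⟩

def oplus (A B : MatSig R) : MatSig R := blockSig A.2.2 0 B.2.2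

lemma oplus_apply (A B : MatSig R) (i : Fin (A.1 + B.1)) (j : Fin (A.2.1 + B.2.1)) :
    (oplus A B).2.2 i j =
      if hi : (i : ℕ) < A.1 then
        (if hj : (j : ℕ) < A.2.1 then A.2.2 ⟨i, hi⟩ ⟨j, hj⟩ else 0)
      else
        (if hj : (j : ℕ) < A.2.1 then 0
         else B.2.2 ⟨(i : ℕ) - A.1, by omega⟩ ⟨(j : ℕ) - A.2.1, by omega⟩) := by
  rw [show (oplus A B).2.2 = (blockSig A.2.2 0 B.2.2).2.2 from rfl, blockSig_apply]
  split_ifs <;> rfl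

/-- `E` padded on the right with zero columns. -/
def padE {p s : ℕ} (E : Matrix (Fin p) (Fin s) R) (x : ℕ) : Matrix (Fin p) (Fin (s + x)) R :=
  Matrix.of fun i j => if h : (j : ℕ) < s then E i ⟨j, h⟩ else 0

lemma padE_zero {p s x : ℕ} : padE (0 : Matrix (Fin p) (Fin s) R) x = 0 := by
  ext i j; simp [padE]

/-- Key block identity: `[[C,E],[0,D]] ⊕ X` equals `[[C, (E 0)],[0, D ⊕ X]]` up to a cast. -/
lemma key_b {p q r s x₁ x₂ : ℕ} (C : Matrix (Fin p) (Fin r) R) (E : Matrix (Fin p) (Fin s) R)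
    (D : Matrix (Fin q) (Fin s) R) (X : Matrix (Fin x₁) (Fin x₂) R) :
    (oplus (blockSig C E D) ⟨x₁, x₂, X⟩).2.2 =
      ((blockSig C (padE E x₂) ((blockSig D 0 X).2.2)).2.2).submatrix
        (finCongr (add_assoc p q x₁)) (finCongr (add_assoc r s x₂)) := by
  have e1 : (blockSig C E D).fst = p + q := rfl
  have e2 : (blockSig C E D).snd.fst = r + s := rfl
  ext i j
  erw [Matrix.submatrix_apply, oplus_apply, blockSig_apply]
  simp only [e1, e2, blockSig_apply, blockSig_apply', padE, Matrix.of_apply, Matrix.zero_apply,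
    finCongr_apply, Fin.coe_cast]
  have hfi : ((finCongr (add_assoc p q x₁)) i : ℕ) = (i : ℕ) := rfl
  have hfj : ((finCongr (add_assoc r s x₂)) j : ℕ) = (j : ℕ) := rfl
  split_ifs <;>
    first
      | rfl
      | omega
      | (apply congrArg₂ _ <;> (apply Fin.ext; simp only []; omega))
      | (erw [blockSig_apply]; simp only [Fin.val_mk, Matrix.zero_apply]; split_ifs <;>
          first | rfl | omega |
          (apply congrArg₂ _ <;> (apply Fin.ext; simp only []; omega)))

/-- the commutation equivalence -/
def commEquiv (a b : ℕ) : Fin (a + b) ≃ Fin (b + a) :=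
  (finSumFinEquiv.symm.trans (Equiv.sumComm (Fin a) (Fin b))).trans finSumFinEquiv

lemma commEquiv_val {a b : ℕ} (i : Fin (a + b)) :
    ((commEquiv a b) i : ℕ) = if (i : ℕ) < a then b + (i : ℕ) else (i : ℕ) - a := by
  simp only [commEquiv, Equiv.trans_apply, finSumFinEquiv_symm_eq]
  split_ifs <;> simp

lemma key_comm (A B : MatSig R) :
    (oplus A B).2.2 = (oplus B A).2.2.submatrix (commEquiv A.1 B.1) (commEquiv A.2.1 B.2.1) := by
  ext i j
  erw [Matrix.submatrix_apply, oplus_apply, oplus_apply]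
  have hi := commEquiv_val i
  have hj := commEquiv_val j
  have hi2 := ((commEquiv A.1 B.1) i).isLt
  have hj2 := ((commEquiv A.2.1 B.2.1) j).isLt
  split_ifs at hi hj ⊢ <;>
    first
      | rfl
      | omega
      | (apply congrArg₂ _ <;>
          (apply Fin.ext; simp only [Fin.val_mk, finCongr_apply, Fin.coe_cast]; try omega))

lemma meq_oplus_unit_right (A : MatSig R) : MEq (oplus A ⟨0, 0, 1⟩) A := by
  have h : (oplus A (⟨0, 0, (1 : Matrix (Fin 0) (Fin 0) R)⟩ : MatSig R)).2.2
      = A.2.2.submatrix (finCongr (Nat.add_zero A.1)) (finCongr (Nat.add_zero A.2.1)) := by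
    ext i j
    rw [show (oplus A (⟨0, 0, (1 : Matrix (Fin 0) (Fin 0) R)⟩ : MatSig R)).2.2
        = (blockSig A.2.2 0 (1 : Matrix (Fin 0) (Fin 0) R)).2.2 from rfl,
      ]
    erw [blockSig_apply, Matrix.submatrix_apply]
    have hi0 : (i : ℕ) < A.1 + 0 := i.isLt
    have hj0 : (j : ℕ) < A.2.1 + 0 := j.isLt
    split_ifs <;>
      first
        | omega
        | (apply congrArg₂ _ <;>
            (apply Fin.ext; simp only [Fin.val_mk, finCongr_apply, Fin.coe_cast]; first | omega | rfl))
  rw [show oplus A ⟨0, 0, 1⟩ = ⟨A.1 + 0, A.2.1 + 0, (oplus A ⟨0, 0, 1⟩).2.2⟩ from rfl]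
  rw [h]
  exact meq_of_equiv A _ _

lemma meq_oplus_unit_left (A : MatSig R) : MEq (oplus ⟨0, 0, 1⟩ A) A := by
  have h : (oplus (⟨0, 0, (1 : Matrix (Fin 0) (Fin 0) R)⟩ : MatSig R) A).2.2
      = A.2.2.submatrix (finCongr (Nat.zero_add A.1)) (finCongr (Nat.zero_add A.2.1)) := by
    ext i j
    rw [show (oplus (⟨0, 0, (1 : Matrix (Fin 0) (Fin 0) R)⟩ : MatSig R) A).2.2
        = (blockSig (1 : Matrix (Fin 0) (Fin 0) R) 0 A.2.2).2.2 from rfl,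
      ]
    erw [blockSig_apply, Matrix.submatrix_apply]
    have hi0 : (i : ℕ) < 0 + A.1 := i.isLt
    have hj0 : (j : ℕ) < 0 + A.2.1 := j.isLt
    split_ifs <;>
      first
        | omega
        | (apply congrArg₂ _ <;>
            (apply Fin.ext; simp only [Fin.val_mk, finCongr_apply, Fin.coe_cast]; first | omega | rfl | (rw [Nat.sub_zero]; rfl)))
  rw [show oplus ⟨0, 0, 1⟩ A = ⟨0 + A.1, 0 + A.2.1, (oplus ⟨0, 0, 1⟩ A).2.2⟩ from rfl]
  rw [h]
  exact meq_of_equiv A _ _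

lemma meq_comm (A B : MatSig R) : MEq (oplus A B) (oplus B A) := by
  rw [show oplus A B = ⟨A.1 + B.1, A.2.1 + B.2.1, (oplus A B).2.2⟩ from rfl, key_comm]
  exact meq_of_equiv (oplus B A) (commEquiv A.1 B.1) (commEquiv A.2.1 B.2.1)

/-- `(A ⊕ B) ⊕ C ≈ A ⊕ (B ⊕ C)` -/
lemma meq_assoc (A B C : MatSig R) : MEq (oplus (oplus A B) C) (oplus A (oplus B C)) := by
  have h := key_b (R := R) A.2.2 (0 : Matrix (Fin A.1) (Fin B.2.1) R) B.2.2 C.2.2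
  rw [padE_zero] at h
  rw [show oplus (oplus A B) C
      = ⟨(A.1 + B.1) + C.1, (A.2.1 + B.2.1) + C.2.1, (oplus (oplus A B) C).2.2⟩ from rfl]
  rw [show (oplus (oplus A B) C).2.2 = (oplus (blockSig A.2.2 0 B.2.2) ⟨C.1, C.2.1, C.2.2⟩).2.2
      from rfl, h]
  exact meq_of_equiv (oplus A (oplus B C)) _ _

/-- block matrices multiply blockwise (diagonal case) -/
lemma oplus_mul {a b c a' b' c' : ℕ}
    (M₁ : Matrix (Fin a) (Fin b) R) (M₂ : Matrix (Fin a') (Fin b') R)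
    (N₁ : Matrix (Fin b) (Fin c) R) (N₂ : Matrix (Fin b') (Fin c') R) :
    (Matrix.fromBlocks M₁ 0 0 M₂).submatrix (⇑finSumFinEquiv.symm) (⇑finSumFinEquiv.symm)
      * (Matrix.fromBlocks N₁ 0 0 N₂).submatrix (⇑finSumFinEquiv.symm) (⇑finSumFinEquiv.symm)
      = (Matrix.fromBlocks (M₁ * N₁) 0 0 (M₂ * N₂)).submatrix
          (⇑finSumFinEquiv.symm) (⇑finSumFinEquiv.symm) := by
  rw [Matrix.submatrix_mul_equiv, Matrix.fromBlocks_multiply]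
  simp

lemma msub_oplus_right {A B : MatSig R} (X : MatSig R) (h : Msub A B) :
    Msub (oplus A X) (oplus B X) := by
  induction h with
  | refl => exact .refl
  | tail _ hstep ih =>
      rename_i B' B hd
      refine ih.trans ?_
      rcases hstep with ⟨Cm, Dm, hmul⟩ | ⟨p, q, r, s, C, E, D, h1, h2⟩
      · have key : (Matrix.fromBlocks B'.2.2 0 0 X.2.2).submatrix
              (⇑finSumFinEquiv.symm) (⇑finSumFinEquiv.symm)
            = (Matrix.fromBlocks Cm 0 0 (1 : Matrix (Fin X.1) (Fin X.1) R)).submatrix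
                (⇑finSumFinEquiv.symm) (⇑finSumFinEquiv.symm)
              * (Matrix.fromBlocks B.2.2 0 0 X.2.2).submatrix
                (⇑finSumFinEquiv.symm) (⇑finSumFinEquiv.symm)
              * (Matrix.fromBlocks Dm 0 0 (1 : Matrix (Fin X.2.1) (Fin X.2.1) R)).submatrix
                (⇑finSumFinEquiv.symm) (⇑finSumFinEquiv.symm) := by
          rw [oplus_mul, oplus_mul, Matrix.one_mul, Matrix.mul_one, hmul]
        exact Relation.ReflTransGen.single (Or.inl
          ⟨(blockSig Cm 0 (1 : Matrix (Fin X.1) (Fin X.1) R)).2.2,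
           (blockSig Dm 0 (1 : Matrix (Fin X.2.1) (Fin X.2.1) R)).2.2, key⟩)
      · subst h1 h2
        have hb1 : MEq (oplus (blockSig C 0 D) X)
            (blockSig C (0 : Matrix (Fin p) (Fin (s + X.2.1)) R) ((blockSig D 0 X.2.2).2.2)) := by
          have h := key_b (R := R) C (0 : Matrix (Fin p) (Fin s) R) D X.2.2
          rw [padE_zero] at h
          rw [show oplus (blockSig C 0 D) X
              = ⟨(p + q) + X.1, (r + s) + X.2.1, (oplus (blockSig C 0 D) X).2.2⟩ from rfl]
          rw [show (oplus (blockSig C 0 D) X).2.2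
              = (oplus (blockSig C 0 D) ⟨X.1, X.2.1, X.2.2⟩).2.2 from rfl, h]
          exact meq_of_equiv _ _ _
        have hb2 : MEq (oplus (blockSig C E D) X)
            (blockSig C (padE E X.2.1) ((blockSig D 0 X.2.2).2.2)) := by
          rw [show oplus (blockSig C E D) X
              = ⟨(p + q) + X.1, (r + s) + X.2.1, (oplus (blockSig C E D) X).2.2⟩ from rfl]
          rw [show (oplus (blockSig C E D) X).2.2
              = (oplus (blockSig C E D) ⟨X.1, X.2.1, X.2.2⟩).2.2 from rfl, key_b]
          exact meq_of_equiv _ _ _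
        have hmid : MStep (blockSig C (0 : Matrix (Fin p) (Fin (s + X.2.1)) R)
              ((blockSig D 0 X.2.2).2.2))
            (blockSig C (padE E X.2.1) ((blockSig D 0 X.2.2).2.2)) :=
          Or.inr ⟨p, q + X.1, r, s + X.2.1, C, padE E X.2.1, (blockSig D 0 X.2.2).2.2, rfl, rfl⟩
        exact (hb1.1.trans (Relation.ReflTransGen.single hmid)).trans hb2.2

lemma msub_oplus_left {A B : MatSig R} (X : MatSig R) (h : Msub A B) :
    Msub (oplus X A) (oplus X B) :=
  ((meq_comm X A).1.trans (msub_oplus_right X h)).trans (meq_comm B X).1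

lemma msub_oplus {A B A' B' : MatSig R} (h : Msub A B) (h' : Msub A' B') :
    Msub (oplus A A') (oplus B B') :=
  (msub_oplus_right A' h).trans (msub_oplus_left B h')

def bigOplus (L : List (MatSig R)) : MatSig R := L.foldr oplus ⟨0, 0, 1⟩

lemma bigOplus_cons (A : MatSig R) (L : List (MatSig R)) :
    bigOplus (A :: L) = oplus A (bigOplus L) := rfl

lemma meq_bigOplus_append (S T : List (MatSig R)) :
    MEq (bigOplus (S ++ T)) (oplus (bigOplus S) (bigOplus T)) := by
  induction S with
  | nil => exact (meq_oplus_unit_left (bigOplus T)).symm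
  | cons a S ih =>
      rw [List.cons_append, bigOplus_cons, bigOplus_cons]
      exact (MEq.trans ⟨msub_oplus_left a ih.1, msub_oplus_left a ih.2⟩
        (meq_assoc a (bigOplus S) (bigOplus T)).symm)

lemma meq_bigOplus_perm {S T : List (MatSig R)} (h : S.Perm T) :
    MEq (bigOplus S) (bigOplus T) := by
  induction h with
  | nil => exact MEq.refl _
  | cons a _ ih =>
      exact ⟨msub_oplus_left a ih.1, msub_oplus_left a ih.2⟩
  | swap a b L =>
      have h1 := meq_assoc (R := R) b a (bigOplus L)
      have h2 := meq_assoc (R := R) a b (bigOplus L)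
      have hc := meq_comm (R := R) b a
      have hc' : MEq (oplus (oplus b a) (bigOplus L)) (oplus (oplus a b) (bigOplus L)) :=
        ⟨msub_oplus_right _ hc.1, msub_oplus_right _ hc.2⟩
      exact (h1.symm.trans hc').trans h2
  | trans _ _ ih ih' => exact ih.trans ih'

lemma oplus_idsig (a b : ℕ) : oplus (idsig R a) (idsig R b) = idsig R (a + b) := by
  have h : (oplus (idsig R a) (idsig R b)).2.2 = (1 : Matrix (Fin (a + b)) (Fin (a + b)) R) := by
    ext i j
    rw [show (oplus (idsig R a) (idsig R b)).2.2
        = (blockSig (1 : Matrix (Fin a) (Fin a) R) 0 (1 : Matrix (Fin b) (Fin b) R)).2.2 from rfl,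
      ]
    erw [blockSig_apply, Matrix.one_apply]
    simp only [Matrix.one_apply, Fin.ext_iff, Fin.val_mk]
    split_ifs <;> first | rfl | omega | exact (if_pos (by assumption)).symm |
      (simp_all [Fin.ext_iff]; done) |
      (simp only [Fin.ext_iff] at *; omega)
  exact congrArg (fun M => (⟨a + b, a + b, M⟩ : MatSig R)) h

/-- everything is below an identity -/
lemma msub_idsig (A : MatSig R) : Msub A (idsig R A.2.1) := by
  refine Relation.ReflTransGen.single (Or.inl
    ⟨A.2.2, (1 : Matrix (Fin A.2.1) (Fin A.2.1) R), ?_⟩)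
  show A.2.2 = A.2.2 * 1 * 1
  rw [Matrix.mul_one, Matrix.mul_one]

/-- identity embeds in larger identity -/
lemma msub_idsig_le {a b : ℕ} (h : a ≤ b) : Msub (idsig R a) (idsig R b) := by
  have key : ((1 : Matrix (Fin b) (Fin b) R)).submatrix
      (fun i : Fin a => (⟨(i : ℕ), by omega⟩ : Fin b))
      (fun i : Fin a => (⟨(i : ℕ), by omega⟩ : Fin b)) = (1 : Matrix (Fin a) (Fin a) R) := by
    ext i j
    simp only [Matrix.submatrix_apply, Matrix.one_apply, Fin.ext_iff, Fin.val_mk]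
  have := mstep_submatrix (idsig R b) (fun i : Fin a => (⟨(i : ℕ), by omega⟩ : Fin b))
      (fun i : Fin a => (⟨(i : ℕ), by omega⟩ : Fin b))
  rw [show (idsig R b).2.2 = (1 : Matrix (Fin b) (Fin b) R) from rfl] at this
  rw [key] at this
  exact Relation.ReflTransGen.single this

/-- the zero sigma is below anything -/
lemma msub_zerosig (A : MatSig R) : Msub (⟨0, 0, 1⟩ : MatSig R) A := by
  refine Relation.ReflTransGen.single (Or.inl ⟨0, 0, ?_⟩)
  ext i j
  exact i.elim0

/-- the bottom-right corner embeds: `B ≼ A ⊕ B` -/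
lemma msub_oplus_corner (A B : MatSig R) : Msub B (oplus A B) := by
  have key : ((oplus A B).2.2).submatrix
      (fun i : Fin B.1 => (⟨A.1 + (i : ℕ), by omega⟩ : Fin (A.1 + B.1)))
      (fun j : Fin B.2.1 => (⟨A.2.1 + (j : ℕ), by omega⟩ : Fin (A.2.1 + B.2.1))) = B.2.2 := by
    ext i j
    erw [Matrix.submatrix_apply, oplus_apply]
    simp only [Fin.val_mk]
    split_ifs <;>
      first
        | omega
        | (apply congrArg₂ _ <;> (apply Fin.ext; simp only [Fin.val_mk]; omega))
  have := mstep_submatrix (oplus A B)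
      (fun i : Fin B.1 => (⟨A.1 + (i : ℕ), by omega⟩ : Fin (A.1 + B.1)))
      (fun j : Fin B.2.1 => (⟨A.2.1 + (j : ℕ), by omega⟩ : Fin (A.2.1 + B.2.1)))
  rw [key] at this
  exact Relation.ReflTransGen.single (by exact this)

lemma bigOplus_replicate_idsig (d : ℕ) :
    bigOplus (List.replicate d (idsig R 1)) = idsig R d := by
  induction d with
  | zero => rfl
  | succ n ih =>
      rw [List.replicate_succ, bigOplus_cons, ih, oplus_idsig, Nat.add_comm]

/-- The key amplification: if `W ⊕ I_d ≼ W` with `d ≥ 1` then identities collapse. -/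
lemma collapse_of_absorb {W : MatSig R} {d : ℕ} (hd : 0 < d)
    (h : Msub (oplus W (idsig R d)) W) :
    ∃ t : ℕ, Msub (idsig R (t + 2)) (idsig R (t + 1)) := by
  set t := W.2.1
  -- W ⊕ I_{d k} ≼ W for all k ≥ 1
  have amp : ∀ k : ℕ, Msub (oplus W (idsig R (d * (k + 1)))) W := by
    intro k
    induction k with
    | zero => simpa using h
    | succ k ih =>
        have h1 : Msub (oplus W (idsig R (d * (k + 2)))) (oplus (oplus W (idsig R d))
            (idsig R (d * (k + 1)))) := by
          have he : oplus (oplus W (idsig R d)) (idsig R (d * (k + 1)))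
              = ⟨(W.1 + d) + d * (k + 1), (W.2.1 + d) + d * (k + 1),
                  (oplus (oplus W (idsig R d)) (idsig R (d * (k + 1)))).2.2⟩ := rfl
          have hm := (meq_assoc W (idsig R d) (idsig R (d * (k + 1)))).2
          rw [oplus_idsig] at hm
          have : d + d * (k + 1) = d * (k + 2) := by ring
          rw [this] at hm
          exact hm
        have h2 : Msub (oplus (oplus W (idsig R d)) (idsig R (d * (k + 1)))) (oplus W
            (idsig R (d * (k + 1)))) := msub_oplus_right _ h
        exact (h1.trans h2).trans ih
  refine ⟨t, ?_⟩
  -- pick k with d * (k+1) ≥ t + 2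
  obtain ⟨k, hk⟩ : ∃ k : ℕ, t + 2 ≤ d * (k + 1) := ⟨t + 2, by nlinarith⟩
  have h1 : Msub (idsig R (t + 2)) (idsig R (d * (k + 1))) := msub_idsig_le hk
  have h2 : Msub (idsig R (d * (k + 1))) (oplus W (idsig R (d * (k + 1)))) :=
    msub_oplus_corner _ _
  have h3 : Msub (oplus W (idsig R (d * (k + 1)))) W := amp k
  have h4 : Msub W (idsig R t) := msub_idsig W
  have h5 : Msub (idsig R t) (idsig R (t + 1)) := msub_idsig_le (by omega)
  exact (((h1.trans h2).trans h3).trans h4).trans h5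

/-! ### The rational cone -/

noncomputable def eB (A : MatSig R) : (MatSig R →₀ ℚ) := Finsupp.single A 1

def Gen (R : Type) [Ring R] : Set (MatSig R →₀ ℚ) :=
  {g | (∃ A B : MatSig R, MStep A B ∧ g = eB B - eB A) ∨
       (∃ A : MatSig R, g = eB A) ∨
       (∃ (p q r s : ℕ) (C : Matrix (Fin p) (Fin r) R) (D : Matrix (Fin q) (Fin s) R),
          g = eB (blockSig C 0 D) - eB ⟨p, r, C⟩ - eB ⟨q, s, D⟩
          ∨ g = eB ⟨p, r, C⟩ + eB ⟨q, s, D⟩ - eB (blockSig C 0 D)) ∨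
       g = - eB (⟨1, 1, 0⟩ : MatSig R)}

noncomputable def PP (R : Type) [Ring R] : AddSubmonoid (MatSig R →₀ ℚ) :=
  AddSubmonoid.closure {x | ∃ c : ℚ, 0 ≤ c ∧ ∃ g ∈ Gen R, x = c • g}

lemma smul_mem_PP {c : ℚ} (hc : 0 ≤ c) {x : MatSig R →₀ ℚ} (hx : x ∈ PP R) :
    c • x ∈ PP R := by
  induction hx using AddSubmonoid.closure_induction with
  | mem y hy =>
      obtain ⟨c', hc', g, hg, rfl⟩ := hy
      rw [smul_smul]
      exact AddSubmonoid.subset_closure ⟨c * c', mul_nonneg hc hc', g, hg, rfl⟩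
  | zero => rw [smul_zero]; exact (PP R).zero_mem
  | add x y _ _ hx hy => rw [smul_add]; exact (PP R).add_mem hx hy

lemma gen_mem_PP {g : MatSig R →₀ ℚ} (hg : g ∈ Gen R) : g ∈ PP R :=
  AddSubmonoid.subset_closure ⟨1, zero_le_one, g, hg, (one_smul _ _).symm⟩

lemma eB_mem_PP (A : MatSig R) : eB A ∈ PP R := gen_mem_PP (Or.inr (Or.inl ⟨A, rfl⟩))

lemma mstep_diff_mem_PP {A B : MatSig R} (h : MStep A B) : eB B - eB A ∈ PP R :=
  gen_mem_PP (Or.inl ⟨A, B, h, rfl⟩)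

lemma diag_diff_mem_PP {p q r s : ℕ} (C : Matrix (Fin p) (Fin r) R)
    (D : Matrix (Fin q) (Fin s) R) :
    eB (blockSig C 0 D) - eB ⟨p, r, C⟩ - eB ⟨q, s, D⟩ ∈ PP R :=
  gen_mem_PP (Or.inr (Or.inr (Or.inl ⟨p, q, r, s, C, D, Or.inl rfl⟩)))

lemma diag_diff_mem_PP' {p q r s : ℕ} (C : Matrix (Fin p) (Fin r) R)
    (D : Matrix (Fin q) (Fin s) R) :
    eB ⟨p, r, C⟩ + eB ⟨q, s, D⟩ - eB (blockSig C 0 D) ∈ PP R :=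
  gen_mem_PP (Or.inr (Or.inr (Or.inl ⟨p, q, r, s, C, D, Or.inr rfl⟩)))

lemma neg_zero_mem_PP : - eB (⟨1, 1, 0⟩ : MatSig R) ∈ PP R :=
  gen_mem_PP (Or.inr (Or.inr (Or.inr rfl)))

/-! ### Soundness of the cone -/

def GoodElt (x : MatSig R →₀ ℚ) : Prop :=
  ∃ m : ℕ, 0 < m ∧ ∃ S T : List (MatSig R),
    (m : ℚ) • x = (T.map eB).sum - (S.map eB).sum ∧ Msub (bigOplus S) (bigOplus T)

lemma sum_map_flatten_replicate (k : ℕ) (S : List (MatSig R)) :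
    (((List.replicate k S).flatten).map eB).sum = (k : ℚ) • ((S.map eB).sum) := by
  induction k with
  | zero => simp
  | succ n ih =>
      rw [List.replicate_succ, List.flatten_cons, List.map_append, List.sum_append, ih]
      push_cast
      rw [add_smul, one_smul]
      abel

lemma msub_bigOplus_flatten_replicate {S T : List (MatSig R)} (k : ℕ)
    (h : Msub (bigOplus S) (bigOplus T)) :
    Msub (bigOplus ((List.replicate k S).flatten)) (bigOplus ((List.replicate k T).flatten)) := by
  induction k with
  | zero => exact .refl
  | succ n ih =>
      rw [List.replicate_succ, List.flatten_cons, List.replicate_succ, List.flatten_cons]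
      exact ((meq_bigOplus_append _ _).1.trans (msub_oplus h ih)).trans
        (meq_bigOplus_append _ _).2

lemma goodElt_smul {x : MatSig R →₀ ℚ} (h : GoodElt x) {c : ℚ} (hc : 0 ≤ c) :
    GoodElt (c • x) := by
  obtain ⟨m, hm, S, T, heq, hsub⟩ := h
  set a : ℕ := c.num.toNat with ha
  refine ⟨c.den * m, by positivity, (List.replicate a S).flatten, (List.replicate a T).flatten,
    ?_, msub_bigOplus_flatten_replicate a hsub⟩
  rw [sum_map_flatten_replicate, sum_map_flatten_replicate, ← smul_sub, ← heq, smul_smul,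
    smul_smul]
  congr 1
  have h1 : ((a : ℚ)) = (c.num : ℚ) := by
    rw [ha]; exact_mod_cast congrArg (fun z : ℤ => (z : ℚ))
      (Int.toNat_of_nonneg (Rat.num_nonneg.2 hc))
  have hden : (c.den : ℚ) * c = (c.num : ℚ) := by
    have hd : (c.den : ℚ) ≠ 0 := by exact_mod_cast c.den_ne_zero
    rw [mul_comm]
    nth_rewrite 1 [← Rat.num_div_den c]
    field_simp
  rw [h1]
  push_cast
  calc (c.den : ℚ) * (m : ℚ) * c = ((c.den : ℚ) * c) * (m : ℚ) := by ring
    _ = (c.num : ℚ) * (m : ℚ) := by rw [hden]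

lemma meq_bigOplus_pair (A B : MatSig R) : MEq (bigOplus [A, B]) (oplus A B) := by
  have h := meq_oplus_unit_right B
  exact ⟨msub_oplus_left A h.1, msub_oplus_left A h.2⟩

lemma meq_bigOplus_single (A : MatSig R) : MEq (bigOplus [A]) A := meq_oplus_unit_right A

lemma goodElt_of_mem_PP {x : MatSig R →₀ ℚ} (hx : x ∈ PP R) : GoodElt x := by
  induction hx using AddSubmonoid.closure_induction with
  | zero => exact ⟨1, one_pos, [], [], by simp, .refl⟩
  | add x y _ _ hx hy =>
      obtain ⟨m₁, hm₁, S₁, T₁, he₁, hs₁⟩ := hx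
      obtain ⟨m₂, hm₂, S₂, T₂, he₂, hs₂⟩ := hy
      refine ⟨m₁ * m₂, by positivity,
        (List.replicate m₂ S₁).flatten ++ (List.replicate m₁ S₂).flatten,
        (List.replicate m₂ T₁).flatten ++ (List.replicate m₁ T₂).flatten, ?_, ?_⟩
      · rw [List.map_append, List.sum_append, List.map_append, List.sum_append,
          sum_map_flatten_replicate, sum_map_flatten_replicate, sum_map_flatten_replicate,
          sum_map_flatten_replicate]
        push_cast
        rw [smul_add]
        have e1 : ((m₁ : ℚ) * m₂) • x = (m₂ : ℚ) • ((m₁ : ℚ) • x) := by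
          rw [smul_smul, mul_comm]
        have e2 : ((m₁ : ℚ) * m₂) • y = (m₁ : ℚ) • ((m₂ : ℚ) • y) := by rw [smul_smul]
        rw [e1, e2, he₁, he₂, smul_sub, smul_sub]
        abel
      · refine Relation.ReflTransGen.trans ((meq_bigOplus_append _ _).1.trans ?_)
          (meq_bigOplus_append _ _).2
        exact msub_oplus (msub_bigOplus_flatten_replicate m₂ hs₁)
          (msub_bigOplus_flatten_replicate m₁ hs₂)
  | mem g hg =>
      obtain ⟨c, hc, g, hg, rfl⟩ := hg
      refine goodElt_smul ?_ hc
      rcases hg with ⟨A, B, hstep, rfl⟩ | ⟨A, rfl⟩ | ⟨p, q, r, s, C, D, hg | hg⟩ | rfl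
      · exact ⟨1, one_pos, [A], [B], by simp, ((meq_bigOplus_single A).1.trans
          (Relation.ReflTransGen.single hstep)).trans (meq_bigOplus_single B).2⟩
      · exact ⟨1, one_pos, [], [A], by simp, msub_zerosig _⟩
      · subst hg
        refine ⟨1, one_pos, [⟨p, r, C⟩, ⟨q, s, D⟩], [blockSig C 0 D],
          by simp only [Nat.cast_one, one_smul, List.map_cons, List.map_nil, List.sum_cons,
            List.sum_nil, add_zero]; try abel, ?_⟩
        exact Relation.ReflTransGen.trans (meq_bigOplus_pair ⟨p, r, C⟩ ⟨q, s, D⟩).1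
          (meq_bigOplus_single (blockSig C 0 D)).2
      · subst hg
        refine ⟨1, one_pos, [blockSig C 0 D], [⟨p, r, C⟩, ⟨q, s, D⟩],
          by simp only [Nat.cast_one, one_smul, List.map_cons, List.map_nil, List.sum_cons,
            List.sum_nil, add_zero]; try abel, ?_⟩
        exact Relation.ReflTransGen.trans (meq_bigOplus_single (blockSig C 0 D)).1
          (meq_bigOplus_pair ⟨p, r, C⟩ ⟨q, s, D⟩).2
      · refine ⟨1, one_pos, [⟨1, 1, 0⟩], [], by simp, ?_⟩
        refine (meq_bigOplus_single _).1.trans (Relation.ReflTransGen.single (Or.inl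
          ⟨(0 : Matrix (Fin 1) (Fin 0) R), (0 : Matrix (Fin 0) (Fin 1) R), ?_⟩))
        ext i j
        erw [Matrix.zero_mul]

noncomputable instance : DecidableEq (MatSig R) := Classical.decEq _

lemma sum_map_eB_apply (L : List (MatSig R)) (A : MatSig R) :
    ((L.map eB).sum) A = ((L : Multiset (MatSig R)).count A : ℚ) := by
  classical
  induction L with
  | nil => simp
  | cons a L ih =>
      rw [List.map_cons, List.sum_cons, Finsupp.add_apply, ih]
      show (Finsupp.single a 1) A + _ = _
      rw [Finsupp.single_apply, show ((a :: L : List (MatSig R)) : Multiset (MatSig R))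
        = a ::ₘ (L : Multiset (MatSig R)) from rfl, Multiset.count_cons]
      by_cases h : a = A
      · subst h; simp; ring
      · rw [if_neg h, if_neg (fun hh => h hh.symm)]; simp

lemma blockSig_one_one (a b : ℕ) :
    blockSig (1 : Matrix (Fin a) (Fin a) R) 0 (1 : Matrix (Fin b) (Fin b) R) = idsig R (a + b) :=
  oplus_idsig a b

theorem nonneg_coeff_of_u_smul_mem
    (hn : ∀ n : ℕ, 0 < n → ¬ Msub (idsig R (n + 1)) (idsig R n))
    {c : ℚ} (hc : c • eB (idsig R 1) ∈ PP R) : 0 ≤ c := by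
  classical
  by_contra hneg
  push_neg at hneg
  obtain ⟨m, hm, S, T, heq, hsub⟩ := goodElt_of_mem_PP hc
  have happ : ∀ A : MatSig R, (m : ℚ) * (c * (if idsig R 1 = A then (1 : ℚ) else 0))
      = ((T : Multiset (MatSig R)).count A : ℚ) - ((S : Multiset (MatSig R)).count A : ℚ) := by
    intro A
    have h := congrArg (fun f : MatSig R →₀ ℚ => f A) heq
    simp only [Finsupp.smul_apply, Finsupp.sub_apply, smul_eq_mul] at h
    rw [sum_map_eB_apply, sum_map_eB_apply] at h
    rw [show (eB (idsig R 1)) A = (if idsig R 1 = A then (1 : ℚ) else 0) from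
      Finsupp.single_apply] at h
    linarith [h]
  have hmc : (m : ℚ) * c < 0 :=
    mul_neg_of_pos_of_neg (by exact_mod_cast hm) hneg
  have hu := happ (idsig R 1)
  rw [if_pos rfl, mul_one] at hu
  set cS := (S : Multiset (MatSig R)).count (idsig R 1) with hcS
  set cT := (T : Multiset (MatSig R)).count (idsig R 1) with hcT
  have hlt : cT < cS := by
    have : (cT : ℚ) < (cS : ℚ) := by linarith
    exact_mod_cast this
  set d : ℕ := cS - cT with hd
  have hdpos : 0 < d := by omega
  have hmult : (S : Multiset (MatSig R))
      = (T : Multiset (MatSig R)) + Multiset.replicate d (idsig R 1) := by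
    ext A
    rw [Multiset.count_add, Multiset.count_replicate]
    by_cases h : A = idsig R 1
    · subst h
      rw [if_pos rfl]
      omega
    · rw [if_neg (fun hh => h hh.symm)]
      have := happ A
      rw [if_neg (fun hh => h hh.symm), mul_zero, mul_zero] at this
      have : ((T : Multiset (MatSig R)).count A : ℚ) = ((S : Multiset (MatSig R)).count A : ℚ) :=
        by linarith
      have : (T : Multiset (MatSig R)).count A = (S : Multiset (MatSig R)).count A := by
        exact_mod_cast this
      omega
  have hperm : S.Perm (T ++ List.replicate d (idsig R 1)) := by
    rw [← Multiset.coe_eq_coe]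
    rw [show ((T ++ List.replicate d (idsig R 1) : List (MatSig R)) : Multiset (MatSig R))
      = (T : Multiset (MatSig R)) + (List.replicate d (idsig R 1) : Multiset (MatSig R)) from rfl]
    rw [Multiset.coe_replicate]
    exact hmult
  -- build the absorption
  have habs : Msub (oplus (bigOplus T) (idsig R d)) (bigOplus T) := by
    have h1 : Msub (oplus (bigOplus T) (idsig R d))
        (bigOplus (T ++ List.replicate d (idsig R 1))) := by
      have := (meq_bigOplus_append T (List.replicate d (idsig R 1))).2
      rw [bigOplus_replicate_idsig] at this
      exact this
    have h2 : Msub (bigOplus (T ++ List.replicate d (idsig R 1))) (bigOplus S) :=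
      (meq_bigOplus_perm hperm).2
    exact (h1.trans h2).trans hsub
  obtain ⟨t, ht⟩ := collapse_of_absorb hdpos habs
  exact hn (t + 1) (by omega) ht

lemma mstep_to_idsig (A : MatSig R) : MStep A (idsig R A.2.1) := by
  refine Or.inl ⟨A.2.2, (1 : Matrix (Fin A.2.1) (Fin A.2.1) R), ?_⟩
  show A.2.2 = A.2.2 * 1 * 1
  rw [Matrix.mul_one, Matrix.mul_one]

lemma idsig_u_diff (n : ℕ) :
    (eB (idsig R n) - (n : ℚ) • eB (idsig R 1) ∈ PP R) ∧
    ((n : ℚ) • eB (idsig R 1) - eB (idsig R n) ∈ PP R) := by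
  induction n with
  | zero =>
      have h0 := diag_diff_mem_PP (R := R) (1 : Matrix (Fin 0) (Fin 0) R)
        (1 : Matrix (Fin 0) (Fin 0) R)
      rw [blockSig_one_one] at h0
      have h0' : - eB (idsig R 0) ∈ PP R := by
        have : eB (idsig R (0 + 0)) - eB (⟨0, 0, 1⟩ : MatSig R) - eB (⟨0, 0, 1⟩ : MatSig R)
            = - eB (idsig R 0) := by
          rw [show (idsig R (0 + 0)) = idsig R 0 from rfl]
          rw [show (⟨0, 0, 1⟩ : MatSig R) = idsig R 0 from rfl]
          abel
        rw [this] at h0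
        exact h0
      constructor
      · simpa using eB_mem_PP (idsig R 0)
      · simpa using h0'
  | succ n ih =>
      have hd := diag_diff_mem_PP (R := R) (1 : Matrix (Fin n) (Fin n) R)
        (1 : Matrix (Fin 1) (Fin 1) R)
      have hd' := diag_diff_mem_PP' (R := R) (1 : Matrix (Fin n) (Fin n) R)
        (1 : Matrix (Fin 1) (Fin 1) R)
      rw [blockSig_one_one] at hd hd'
      constructor
      · have := (PP R).add_mem ((PP R).add_mem hd ih.1) (by
          exact (PP R).zero_mem)
        have key := (PP R).add_mem hd ih.1
        have : eB (idsig R (n + 1)) - eB (⟨n, n, 1⟩ : MatSig R) - eB (⟨1, 1, 1⟩ : MatSig R)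
            + (eB (idsig R n) - (n : ℚ) • eB (idsig R 1))
            = eB (idsig R (n + 1)) - ((n : ℚ) + 1) • eB (idsig R 1) := by
          rw [show (⟨n, n, 1⟩ : MatSig R) = idsig R n from rfl,
            show (⟨1, 1, 1⟩ : MatSig R) = idsig R 1 from rfl, add_smul, one_smul]
          abel
        rw [this] at key
        rw [show ((n + 1 : ℕ) : ℚ) = (n : ℚ) + 1 from by push_cast; ring]
        exact key
      · have key := (PP R).add_mem hd' ih.2
        have : eB (⟨n, n, 1⟩ : MatSig R) + eB (⟨1, 1, 1⟩ : MatSig R) - eB (idsig R (n + 1))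
            + ((n : ℚ) • eB (idsig R 1) - eB (idsig R n))
            = ((n : ℚ) + 1) • eB (idsig R 1) - eB (idsig R (n + 1)) := by
          rw [show (⟨n, n, 1⟩ : MatSig R) = idsig R n from rfl,
            show (⟨1, 1, 1⟩ : MatSig R) = idsig R 1 from rfl, add_smul, one_smul]
          abel
        rw [this] at key
        rw [show ((n + 1 : ℕ) : ℚ) = (n : ℚ) + 1 from by push_cast; ring]
        exact key

lemma exists_le_u (x : MatSig R →₀ ℚ) : ∃ c : ℚ, c • eB (idsig R 1) - x ∈ PP R := by
  induction x using Finsupp.induction_linear with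
  | zero => exact ⟨0, by simpa using (PP R).zero_mem⟩
  | add f g hf hg =>
      obtain ⟨c₁, h₁⟩ := hf
      obtain ⟨c₂, h₂⟩ := hg
      refine ⟨c₁ + c₂, ?_⟩
      have := (PP R).add_mem h₁ h₂
      have heq : c₁ • eB (idsig R 1) - f + (c₂ • eB (idsig R 1) - g)
          = (c₁ + c₂) • eB (idsig R 1) - (f + g) := by rw [add_smul]; abel
      rwa [heq] at this
  | single A b =>
      rcases le_or_gt 0 b with hb | hb
      · refine ⟨b * A.2.1, ?_⟩
        have h1 : eB (idsig R A.2.1) - eB A ∈ PP R := mstep_diff_mem_PP (mstep_to_idsig A)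
        have h2 := (idsig_u_diff (R := R) A.2.1).2
        have key := smul_mem_PP hb ((PP R).add_mem h1 h2)
        have heq : b • (eB (idsig R A.2.1) - eB A
            + ((A.2.1 : ℚ) • eB (idsig R 1) - eB (idsig R A.2.1)))
            = (b * A.2.1) • eB (idsig R 1) - Finsupp.single A b := by
          rw [show (Finsupp.single A b : MatSig R →₀ ℚ) = b • eB A from by
            rw [eB, Finsupp.smul_single, smul_eq_mul, mul_one]]
          rw [smul_add, smul_sub, smul_sub, smul_smul]
          abel
        rwa [heq] at key
      · refine ⟨0, ?_⟩
        have key := smul_mem_PP (by linarith : (0 : ℚ) ≤ -b) (eB_mem_PP A)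
        have heq : (-b) • eB A = (0 : ℚ) • eB (idsig R 1) - Finsupp.single A b := by
          rw [show (Finsupp.single A b : MatSig R →₀ ℚ) = b • eB A from by
            rw [eB, Finsupp.smul_single, smul_eq_mul, mul_one]]
          rw [zero_smul, neg_smul]
          abel
        rwa [heq] at key

/-! ### Riesz extension over ℚ -/

open Submodule in
theorem riesz_step_Q (f : (MatSig R →₀ ℚ) →ₗ.[ℚ] ℝ)
    (nonneg : ∀ x : f.domain, (x : MatSig R →₀ ℚ) ∈ PP R → 0 ≤ f x)
    (dense : ∀ y, ∃ x : f.domain, (x : MatSig R →₀ ℚ) + y ∈ PP R)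
    (hdom : f.domain ≠ ⊤) :
    ∃ g, f < g ∧ ∀ x : g.domain, (x : MatSig R →₀ ℚ) ∈ PP R → 0 ≤ g x := by
  obtain ⟨y, -, hy⟩ : ∃ y ∈ ⊤, y ∉ f.domain := SetLike.exists_of_lt (lt_top_iff_ne_top.2 hdom)
  obtain ⟨c, le_c, c_le⟩ :
      ∃ c : ℝ, (∀ x : f.domain, -(x : MatSig R →₀ ℚ) - y ∈ PP R → f x ≤ c) ∧
        ∀ x : f.domain, (x : MatSig R →₀ ℚ) + y ∈ PP R → c ≤ f x := by
    set Sp := f '' { x : f.domain | (x : MatSig R →₀ ℚ) + y ∈ PP R }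
    set Sn := f '' { x : f.domain | -(x : MatSig R →₀ ℚ) - y ∈ PP R }
    suffices (upperBounds Sn ∩ lowerBounds Sp).Nonempty by
      simpa only [Sp, Sn, Set.Nonempty, upperBounds, lowerBounds, Set.forall_mem_image] using! this
    refine exists_between_of_forall_le (Set.Nonempty.image f ?_) (Set.Nonempty.image f (dense y))
      ?_
    · rcases dense (-y) with ⟨x, hx⟩
      rw [← neg_neg x, NegMemClass.coe_neg, ← sub_eq_add_neg] at hx
      exact ⟨_, hx⟩
    rintro a ⟨xn, hxn, rfl⟩ b ⟨xp, hxp, rfl⟩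
    have := (PP R).add_mem hxp hxn
    rw [add_assoc, add_sub_cancel, ← sub_eq_add_neg, ← AddSubgroupClass.coe_sub] at this
    replace := nonneg _ this
    rwa [f.map_sub, sub_nonneg] at this
  refine ⟨f.supSpanSingleton y (-c) hy, ?_, ?_⟩
  · refine lt_iff_le_not_ge.2 ⟨f.left_le_sup _ _, fun H => ?_⟩
    replace H := LinearPMap.domain_mono.monotone H
    rw [LinearPMap.domain_supSpanSingleton, sup_le_iff, span_le, Set.singleton_subset_iff] at H
    exact hy H.2
  · rintro ⟨z, hz⟩ hzs
    rcases mem_sup.1 hz with ⟨x, hx, y', hy', rfl⟩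
    rcases mem_span_singleton.1 hy' with ⟨r, rfl⟩
    simp only [Subtype.coe_mk] at hzs
    rw [LinearPMap.supSpanSingleton_apply_mk _ _ _ _ _ hx, smul_neg, ← sub_eq_add_neg, sub_nonneg]
    rcases lt_trichotomy r 0 with (hr | hr | hr)
    · have : -(r⁻¹ • x) - y ∈ PP R := by
        have hmem := smul_mem_PP (c := -r⁻¹) (neg_nonneg.2 (inv_nonpos.2 hr.le)) hzs
        have : (-r⁻¹) • (x + r • y) = -(r⁻¹ • x) - y := by
          simp only [smul_add, smul_smul, neg_mul, inv_mul_cancel₀ hr.ne, neg_smul, one_smul]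
          abel
        rwa [this] at hmem
      replace : f (r⁻¹ • ⟨x, hx⟩) ≤ c := le_c (r⁻¹ • ⟨x, hx⟩) (by exact this)
      rw [f.map_smul] at this
      have hrR : (r : ℝ) < 0 := by exact_mod_cast hr
      calc r • c = (r : ℝ) * c := by rw [Rat.smul_def]
        _ ≤ (r : ℝ) * ((r : ℚ)⁻¹ • f ⟨x, hx⟩) := by
            apply mul_le_mul_of_nonpos_left this hrR.le
        _ = f ⟨x, hx⟩ := by
            rw [Rat.smul_def, Rat.cast_inv, ← mul_assoc, mul_inv_cancel₀ hrR.ne, one_mul]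
    · subst r
      simp only [zero_smul, add_zero] at hzs ⊢
      rw [RingHom.id_apply, zero_smul]
      exact nonneg _ hzs
    · have : r⁻¹ • x + y ∈ PP R := by
        have hmem := smul_mem_PP (c := r⁻¹) (by positivity) hzs
        have : (r⁻¹) • (x + r • y) = r⁻¹ • x + y := by
          rw [smul_add, smul_smul, inv_mul_cancel₀ hr.ne', one_smul]
        rwa [this] at hmem
      replace : c ≤ f (r⁻¹ • ⟨x, hx⟩) := c_le (r⁻¹ • ⟨x, hx⟩) (by exact this)
      rw [f.map_smul] at this
      have hrR : (0 : ℝ) < (r : ℝ) := by exact_mod_cast hr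
      calc r • c = (r : ℝ) * c := by rw [Rat.smul_def]
        _ ≤ (r : ℝ) * ((r : ℚ)⁻¹ • f ⟨x, hx⟩) := by
            apply mul_le_mul_of_nonneg_left this hrR.le
        _ = f ⟨x, hx⟩ := by
            rw [Rat.smul_def, Rat.cast_inv, ← mul_assoc, mul_inv_cancel₀ hrR.ne', one_mul]

open Submodule in
theorem riesz_top_Q (p : (MatSig R →₀ ℚ) →ₗ.[ℚ] ℝ)
    (hp_nonneg : ∀ x : p.domain, (x : MatSig R →₀ ℚ) ∈ PP R → 0 ≤ p x)
    (hp_dense : ∀ y, ∃ x : p.domain, (x : MatSig R →₀ ℚ) + y ∈ PP R) :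
    ∃ q ≥ p, q.domain = ⊤ ∧ ∀ x : q.domain, (x : MatSig R →₀ ℚ) ∈ PP R → 0 ≤ q x := by
  set S := { p : (MatSig R →₀ ℚ) →ₗ.[ℚ] ℝ |
    ∀ x : p.domain, (x : MatSig R →₀ ℚ) ∈ PP R → 0 ≤ p x }
  have hSc : ∀ c, c ⊆ S → IsChain (· ≤ ·) c → ∀ y ∈ c, ∃ ub ∈ S, ∀ z ∈ c, z ≤ ub := by
    intro c hcs c_chain y hy
    clear hp_nonneg hp_dense p
    have cne : c.Nonempty := ⟨y, hy⟩
    have hcd : DirectedOn (· ≤ ·) c := c_chain.directedOn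
    refine ⟨LinearPMap.sSup c hcd, ?_, fun _ ↦ LinearPMap.le_sSup hcd⟩
    rintro ⟨x, hx⟩ hxs
    have hdir : DirectedOn (· ≤ ·) (LinearPMap.domain '' c) :=
      directedOn_image.2 (hcd.mono LinearPMap.domain_mono.monotone)
    rcases (Submodule.mem_sSup_of_directed (cne.image _) hdir).1 hx with ⟨_, ⟨f, hfc, rfl⟩, hfx⟩
    have : f ≤ LinearPMap.sSup c hcd := LinearPMap.le_sSup _ hfc
    convert ← hcs hfc ⟨x, hfx⟩ hxs using 1
    exact this.2 rfl
  obtain ⟨q, hpq, hqs, hq⟩ := zorn_le_nonempty₀ S hSc p hp_nonneg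
  refine ⟨q, hpq, ?_, hqs⟩
  contrapose! hq
  have hqd : ∀ y, ∃ x : q.domain, (x : MatSig R →₀ ℚ) + y ∈ PP R := fun y ↦
    let ⟨x, hx⟩ := hp_dense y
    ⟨Submodule.inclusion hpq.left x, hx⟩
  rcases riesz_step_Q q hqs hqd hq with ⟨r, hqr, hr⟩
  exact ⟨r, hr, hqr.le, fun hrq ↦ hqr.ne' <| hrq.antisymm hqr.le⟩

theorem exists_functional
    (hn : ∀ n : ℕ, 0 < n → ¬ Msub (idsig R (n + 1)) (idsig R n)) :
    ∃ φ : (MatSig R →₀ ℚ) →ₗ[ℚ] ℝ, (∀ x ∈ PP R, 0 ≤ φ x) ∧ φ (eB (idsig R 1)) = 1 := by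
  have hu0 : eB (idsig R 1) ≠ (0 : MatSig R →₀ ℚ) := by
    simp [eB, Finsupp.single_eq_zero]
  set f₀ : (MatSig R →₀ ℚ) →ₗ.[ℚ] ℝ := LinearPMap.mkSpanSingleton (eB (idsig R 1)) 1 hu0 with hf₀
  have hnonneg : ∀ x : f₀.domain, (x : MatSig R →₀ ℚ) ∈ PP R → 0 ≤ f₀ x := by
    rintro ⟨x, hx⟩ hxs
    rcases Submodule.mem_span_singleton.1 hx with ⟨r, rfl⟩
    have hr : 0 ≤ r := nonneg_coeff_of_u_smul_mem hn hxs
    have : f₀ ⟨r • eB (idsig R 1), hx⟩ = r • (1 : ℝ) := by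
      exact LinearPMap.mkSpanSingleton'_apply _ _ _ r _
    rw [this, Rat.smul_def, mul_one]
    exact_mod_cast hr
  have hdense : ∀ y, ∃ x : f₀.domain, (x : MatSig R →₀ ℚ) + y ∈ PP R := by
    intro y
    obtain ⟨c, hc⟩ := exists_le_u (-y)
    refine ⟨⟨c • eB (idsig R 1), Submodule.smul_mem _ _ (Submodule.mem_span_singleton_self _)⟩,
      ?_⟩
    simpa [sub_neg_eq_add] using hc
  obtain ⟨q, hpq, hdomtop, hq⟩ := riesz_top_Q f₀ hnonneg hdense
  refine ⟨q.toFun.comp (LinearMap.id.codRestrict q.domain fun x => hdomtop ▸ trivial), ?_, ?_⟩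
  · intro x hx
    exact hq ⟨x, hdomtop ▸ trivial⟩ hx
  · have humem : eB (idsig R 1) ∈ f₀.domain := Submodule.mem_span_singleton_self _
    have h1 : f₀ ⟨eB (idsig R 1), humem⟩ = 1 := LinearPMap.mkSpanSingleton_apply ℚ ℚ hu0 (1 : ℝ)
    have h2 := hpq.2 (x := ⟨eB (idsig R 1), humem⟩)
      (y := ⟨eB (idsig R 1), hdomtop ▸ trivial⟩) rfl
    exact h2.symm.trans h1

/-- build a Sylvester rank function from a positive normalized functional -/
noncomputable def mkRank (φ : (MatSig R →₀ ℚ) →ₗ[ℚ] ℝ) (hpos : ∀ x ∈ PP R, 0 ≤ φ x)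
    (hone : φ (eB (idsig R 1)) = 1) : SylvesterRank R where
  rk A := φ (eB A)
  rk_nonneg A := hpos _ (eB_mem_PP A)
  rk_zero := by
    have h1 : 0 ≤ φ (eB (⟨1, 1, 0⟩ : MatSig R)) := hpos _ (eB_mem_PP _)
    have h2 : 0 ≤ φ (- eB (⟨1, 1, 0⟩ : MatSig R)) := hpos _ neg_zero_mem_PP
    rw [map_neg] at h2
    linarith
  rk_one := hone
  rk_mul_le_left {n m k} A B := by
    have hstep : MStep (⟨n, k, A * B⟩ : MatSig R) (⟨n, m, A⟩ : MatSig R) :=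
      Or.inl ⟨(1 : Matrix (Fin n) (Fin n) R), B, by rw [Matrix.one_mul]⟩
    have := hpos _ (mstep_diff_mem_PP hstep)
    rw [map_sub] at this
    linarith
  rk_mul_le_right {n m k} A B := by
    have hstep : MStep (⟨n, k, A * B⟩ : MatSig R) (⟨m, k, B⟩ : MatSig R) :=
      Or.inl ⟨A, (1 : Matrix (Fin k) (Fin k) R), by rw [Matrix.mul_one]⟩
    have := hpos _ (mstep_diff_mem_PP hstep)
    rw [map_sub] at this
    linarith
  rk_diag {p q r s} A B := by
    have h1 := hpos _ (diag_diff_mem_PP A B)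
    have h2 := hpos _ (diag_diff_mem_PP' A B)
    rw [map_sub, map_sub] at h1
    rw [map_sub, map_add] at h2
    linarith
  rk_block_ge {p q r s} A E B := by
    have hstep : MStep (blockSig A 0 B) (blockSig A E B) := Or.inr ⟨p, q, r, s, A, E, B, rfl, rfl⟩
    have h0 := hpos _ (mstep_diff_mem_PP hstep)
    have h1 := hpos _ (diag_diff_mem_PP A B)
    rw [map_sub] at h0
    rw [map_sub, map_sub] at h1
    linarith

/-- monotonicity of any Sylvester rank function along `MStep` -/
lemma rank_mono (f : SylvesterRank R) {X Y : MatSig R} (h : MStep X Y) : f.rk X ≤ f.rk Y := by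
  rcases h with ⟨C, D, hmul⟩ | ⟨p, q, r, s, C, E, D, h1, h2⟩
  · have hX : X = ⟨X.1, X.2.1, C * Y.2.2 * D⟩ := by rw [← hmul]
    calc f.rk X = f.rk ⟨X.1, X.2.1, C * Y.2.2 * D⟩ := by rw [← hX]
      _ ≤ f.rk ⟨X.1, Y.2.1, C * Y.2.2⟩ := f.rk_mul_le_left _ _
      _ ≤ f.rk ⟨Y.1, Y.2.1, Y.2.2⟩ := f.rk_mul_le_right _ _
      _ = f.rk Y := rfl
  · subst h1 h2
    rw [f.rk_diag]
    exact f.rk_block_ge C E D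

lemma rank_mono_msub (f : SylvesterRank R) {X Y : MatSig R} (h : Msub X Y) :
    f.rk X ≤ f.rk Y := by
  induction h with
  | refl => exact le_refl _
  | tail _ hstep ih => exact ih.trans (rank_mono f hstep)

lemma rank_idsig (f : SylvesterRank R) (n : ℕ) : f.rk (idsig R n) = n := by
  induction n with
  | zero =>
      have h := f.rk_diag (1 : Matrix (Fin 0) (Fin 0) R) (1 : Matrix (Fin 0) (Fin 0) R)
      rw [blockSig_one_one] at h
      rw [show idsig R (0 + 0) = idsig R 0 from rfl] at h
      have : f.rk (idsig R 0) = f.rk (⟨0, 0, 1⟩ : MatSig R) := rfl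
      rw [this] at h ⊢
      norm_num
      linarith
  | succ n ih =>
      have h := f.rk_diag (1 : Matrix (Fin n) (Fin n) R) (1 : Matrix (Fin 1) (Fin 1) R)
      rw [blockSig_one_one] at h
      rw [h, ih, f.rk_one]
      push_cast
      ring
end Stmt3

open Stmt3

/-- Proposition: a (nonzero) unital ring `R` has a Sylvester matrix rank function if and only if
`I_{n+1}` is not Malcolmson subequivalent to `I_n` for every `n ∈ ℕ` (`n ≥ 1`). -/
theorem stmt_3 {R : Type} [Ring R] [Nontrivial R] :
    Nonempty (SylvesterRank R) ↔
      ∀ n : ℕ, 0 < n → ¬ Msub (⟨n + 1, n + 1, (1 : Matrix (Fin (n + 1)) (Fin (n + 1)) R)⟩ : MatSig R)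
        (⟨n, n, (1 : Matrix (Fin n) (Fin n) R)⟩ : MatSig R) := by
  constructor
  · rintro ⟨f⟩ n hn hmsub
    have hle := rank_mono_msub f hmsub
    have h1 : f.rk (idsig R (n + 1)) = ((n + 1 : ℕ) : ℝ) := rank_idsig f (n + 1)
    have h2 : f.rk (idsig R n) = (n : ℝ) := rank_idsig f n
    rw [show (⟨n + 1, n + 1, (1 : Matrix (Fin (n + 1)) (Fin (n + 1)) R)⟩ : MatSig R)
      = idsig R (n + 1) from rfl, show (⟨n, n, (1 : Matrix (Fin n) (Fin n) R)⟩ : MatSig R)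
      = idsig R n from rfl] at hmsub
    have := rank_mono_msub f hmsub
    rw [h1, h2] at this
    push_cast at this
    linarith
  · intro hn
    obtain ⟨φ, hpos, hone⟩ := exists_functional (R := R) hn
    exact ⟨mkRank φ hpos hone⟩
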